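/- Let μ > 0, μ_c > 0 and λ ∈ ℝ with 2μ + 3λ > 0, let n ∈ ℝ³ with ‖n‖ = 1, and let E ∈ ℝ^{3×3} satisfy E n = 0. Then the function v ↦ μ‖sym(E + v ⊗ n)‖² + μ_c‖skew(E + v ⊗ n)‖² + (λ/2)(tr(E + v ⊗ n))² has a unique global minimizer v* = ((μ_c − μ)/(μ_c + μ)) Eᵀn − (λ/(λ + 2μ)) tr(E) n. Consequently, for any Q ∈ SO(3) the optimal third-column vector in the membrane optimization problem is d̃* = Q(n + v*) = (1 − (λ/(λ+2μ)) tr(E)) Q n + ((μ_c − μ)/(μ_c + μ)) Q Eᵀ n. -/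

import Mathlib

open Matrix

noncomputable section

/-- Symmetric part of a matrix. -/
def msym {n : ℕ} (X : Matrix (Fin n) (Fin n) ℝ) : Matrix (Fin n) (Fin n) ℝ :=
  (1 / 2 : ℝ) • (X + Xᵀ)

/-- Skew-symmetric part of a matrix. -/
def mskew {n : ℕ} (X : Matrix (Fin n) (Fin n) ℝ) : Matrix (Fin n) (Fin n) ℝ :=
  (1 / 2 : ℝ) • (X - Xᵀ)

/-- Squared Frobenius norm `‖X‖² = tr(XᵀX)`. -/
def mnormSq {n : ℕ} (X : Matrix (Fin n) (Fin n) ℝ) : ℝ :=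
  Matrix.trace (Xᵀ * X)

/-- Squared Euclidean norm on `ℝ³`. -/
def vnormSq (v : Fin 3 → ℝ) : ℝ := ∑ i, (v i) ^ 2

/-- The quadratic isotropic membrane energy. -/
def Wmp (μ μc lam : ℝ) (X : Matrix (Fin 3) (Fin 3) ℝ) : ℝ :=
  μ * mnormSq (msym X) + μc * mnormSq (mskew X)
    + (lam / 2) * (Matrix.trace X) ^ 2

/-- The optimal vector `v*` of the membrane optimization problem. -/
def vstar (μ μc lam : ℝ) (n : Fin 3 → ℝ) (E : Matrix (Fin 3) (Fin 3) ℝ) :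
    Fin 3 → ℝ :=
  ((μc - μ) / (μc + μ)) • Eᵀ.mulVec n - (lam / (lam + 2 * μ) * Matrix.trace E) • n

lemma expand (μ μc lam : ℝ) (n v : Fin 3 → ℝ) (E : Matrix (Fin 3) (Fin 3) ℝ) :
    Wmp μ μc lam (E + vecMulVec v n)
      = Wmp μ μc lam E + (μ - μc) * (v ⬝ᵥ Eᵀ.mulVec n) + (μ + μc) * (v ⬝ᵥ E.mulVec n)
        + (μ / 2) * ((v ⬝ᵥ v) * (n ⬝ᵥ n) + (v ⬝ᵥ n) ^ 2)
        + (μc / 2) * ((v ⬝ᵥ v) * (n ⬝ᵥ n) - (v ⬝ᵥ n) ^ 2)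
        + lam * Matrix.trace E * (v ⬝ᵥ n) + (lam / 2) * (v ⬝ᵥ n) ^ 2 := by
  simp only [Wmp, mnormSq, msym, mskew, Matrix.trace, Matrix.diag, Matrix.mul_apply,
    Matrix.transpose_apply, Matrix.add_apply, Matrix.smul_apply, Matrix.sub_apply,
    vecMulVec_apply, dotProduct, mulVec, Fin.sum_univ_three, smul_eq_mul]
  ring

lemma cs3 (u w : Fin 3 → ℝ) : (u ⬝ᵥ w) ^ 2 ≤ (u ⬝ᵥ u) * (w ⬝ᵥ w) := by
  simp only [dotProduct, Fin.sum_univ_three]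
  nlinarith [sq_nonneg (u 0 * w 1 - u 1 * w 0), sq_nonneg (u 0 * w 2 - u 2 * w 0),
    sq_nonneg (u 1 * w 2 - u 2 * w 1)]

lemma key_scalar (μ μc lam t P a s q c d : ℝ) (h1 : μc + μ ≠ 0) (h2 : lam + 2 * μ ≠ 0)
    (hc : c = (μc - μ) / (μc + μ)) (hd : d = lam / (lam + 2 * μ) * t) :
    (μ - μc) * s + (μ / 2) * (q * 1 + a ^ 2) + (μc / 2) * (q * 1 - a ^ 2)
        + lam * t * a + (lam / 2) * a ^ 2
      = ((μ - μc) * (c * P) + (μ / 2) * ((c ^ 2 * P + d ^ 2) * 1 + (-d) ^ 2)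
          + (μc / 2) * ((c ^ 2 * P + d ^ 2) * 1 - (-d) ^ 2)
          + lam * t * (-d) + (lam / 2) * (-d) ^ 2)
        + ((μ + μc) / 2) * ((q - 2 * (c * s - d * a) + (c ^ 2 * P + d ^ 2)) - (a + d) ^ 2)
        + ((lam + 2 * μ) / 2) * (a + d) ^ 2 := by
  have E1 : c * (μc + μ) = μc - μ := by rw [hc]; field_simp
  have E2 : d * (lam + 2 * μ) = lam * t := by rw [hd]; field_simp
  linear_combination (s - c * P) * E1 - (a + d) * E2

theorem stmt_19 (μ μc lam : ℝ) (hμ : 0 < μ) (hμc : 0 < μc)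
    (hbulk : 0 < 2 * μ + 3 * lam)
    (n : Fin 3 → ℝ) (hn : vnormSq n = 1)
    (E : Matrix (Fin 3) (Fin 3) ℝ) (hE : E.mulVec n = 0) :
    (∀ v : Fin 3 → ℝ,
        Wmp μ μc lam (E + vecMulVec (vstar μ μc lam n E) n)
          ≤ Wmp μ μc lam (E + vecMulVec v n)) ∧
    (∀ v : Fin 3 → ℝ,
        Wmp μ μc lam (E + vecMulVec v n)
            = Wmp μ μc lam (E + vecMulVec (vstar μ μc lam n E) n) →
          v = vstar μ μc lam n E) ∧
    (∀ Q : Matrix (Fin 3) (Fin 3) ℝ, Qᵀ * Q = 1 → Q.det = 1 →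
        Q.mulVec (n + vstar μ μc lam n E)
          = (1 - lam / (lam + 2 * μ) * Matrix.trace E) • Q.mulVec n
            + ((μc - μ) / (μc + μ)) • Q.mulVec (Eᵀ.mulVec n)) := by
  have h2μ : lam + 2 * μ > 0 := by linarith
  have hμμ : μc + μ > 0 := by linarith
  have h2μ' : lam + 2 * μ ≠ 0 := ne_of_gt h2μ
  have hμμ' : μc + μ ≠ 0 := ne_of_gt hμμ
  have hnn : n ⬝ᵥ n = 1 := by simpa [vnormSq, dotProduct, sq] using hn
  have hpn : Eᵀ.mulVec n ⬝ᵥ n = 0 := by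
    have h : Eᵀ.mulVec n ⬝ᵥ n = n ⬝ᵥ E.mulVec n := by
      rw [mulVec_transpose, ← dotProduct_mulVec]
    rw [h, hE, dotProduct_zero]
  have hnp : n ⬝ᵥ Eᵀ.mulVec n = 0 := by rw [dotProduct_comm]; exact hpn
  have hEv : ∀ w : Fin 3 → ℝ, w ⬝ᵥ E.mulVec n = 0 := fun w => by
    rw [hE, dotProduct_zero]
  have hvst : vstar μ μc lam n E
      = ((μc - μ) / (μc + μ)) • Eᵀ.mulVec n
        - (lam / (lam + 2 * μ) * Matrix.trace E) • n := rfl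
  set p : Fin 3 → ℝ := Eᵀ.mulVec n with hp
  set c : ℝ := (μc - μ) / (μc + μ) with hc
  set d : ℝ := lam / (lam + 2 * μ) * Matrix.trace E with hd
  set vst : Fin 3 → ℝ := vstar μ μc lam n E with hv0
  have e1 : vst ⬝ᵥ p = c * (p ⬝ᵥ p) := by
    rw [hvst]
    simp only [sub_dotProduct, smul_dotProduct, smul_eq_mul, hnp]
    ring
  have e2 : vst ⬝ᵥ n = -d := by
    rw [hvst]
    simp only [sub_dotProduct, smul_dotProduct, smul_eq_mul, hpn, hnn]
    ring
  have e3 : vst ⬝ᵥ vst = c ^ 2 * (p ⬝ᵥ p) + d ^ 2 := by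
    rw [hvst]
    simp only [dotProduct_sub, sub_dotProduct, dotProduct_smul, smul_dotProduct,
      smul_eq_mul, hpn, hnp, hnn]
    ring
  have e4 : ∀ v : Fin 3 → ℝ, (v - vst) ⬝ᵥ (v - vst)
      = (v ⬝ᵥ v) - 2 * (c * (v ⬝ᵥ p) - d * (v ⬝ᵥ n)) + (c ^ 2 * (p ⬝ᵥ p) + d ^ 2) := by
    intro v
    rw [hvst]
    simp only [dotProduct_sub, sub_dotProduct, dotProduct_smul, smul_dotProduct,
      smul_eq_mul, hpn, hnp, hnn, dotProduct_comm p v, dotProduct_comm n v]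
    ring
  have e5 : ∀ v : Fin 3 → ℝ, (v - vst) ⬝ᵥ n = (v ⬝ᵥ n) + d := by
    intro v
    rw [hvst]
    simp only [sub_dotProduct, smul_dotProduct, smul_eq_mul, hpn, hnn, e2]
    ring
  have Hmain : ∀ v : Fin 3 → ℝ,
      Wmp μ μc lam (E + vecMulVec v n)
        = Wmp μ μc lam (E + vecMulVec vst n)
          + ((μ + μc) / 2) * (((v - vst) ⬝ᵥ (v - vst)) - ((v - vst) ⬝ᵥ n) ^ 2)
          + ((lam + 2 * μ) / 2) * (((v - vst) ⬝ᵥ n) ^ 2) := by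
    intro v
    rw [expand, expand, hEv, hEv, e1, e2, e3, e4, e5, hnn]
    linear_combination key_scalar μ μc lam (Matrix.trace E) (p ⬝ᵥ p) (v ⬝ᵥ n) (v ⬝ᵥ p)
      (v ⬝ᵥ v) c d hμμ' h2μ' hc hd
  refine ⟨?_, ?_, ?_⟩
  · intro v
    rw [Hmain v]
    have h1 := cs3 (v - vst) n
    rw [hnn, mul_one] at h1
    have t1 : 0 ≤ ((μ + μc) / 2) * (((v - vst) ⬝ᵥ (v - vst)) - ((v - vst) ⬝ᵥ n) ^ 2) :=
      mul_nonneg (by linarith) (by linarith)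
    have t2 : 0 ≤ ((lam + 2 * μ) / 2) * (((v - vst) ⬝ᵥ n) ^ 2) :=
      mul_nonneg (by linarith) (sq_nonneg _)
    linarith
  · intro v hveq
    rw [Hmain v] at hveq
    have h1 := cs3 (v - vst) n
    rw [hnn, mul_one] at h1
    have h2 := sq_nonneg ((v - vst) ⬝ᵥ n)
    have hA : ((v - vst) ⬝ᵥ (v - vst)) - ((v - vst) ⬝ᵥ n) ^ 2 = 0 := by nlinarith
    have hB : ((v - vst) ⬝ᵥ n) ^ 2 = 0 := by nlinarith
    have huu : (v - vst) ⬝ᵥ (v - vst) = 0 := by linarith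
    have hz : v - vst = 0 := dotProduct_self_eq_zero.mp huu
    exact sub_eq_zero.mp hz
  · intro Q _ _
    rw [hvst, mulVec_add, mulVec_sub, Matrix.mulVec_smul, Matrix.mulVec_smul,
      sub_smul, one_smul]
    abel
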